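/- Upper bound for tripartite entanglement of purification: Δ_P(A:B:C) ≤ S_A + S_B + S_{AB} for any tripartite state ρ_{ABC}; hence Δ_P(A:B:C) ≤ min{S_A + S_B + S_{AB}, S_B + S_C + S_{BC}, S_C + S_A + S_{CA}}. -/

import Mathlib

open scoped BigOperators ComplexOrder

noncomputable section

/-- Von Neumann entropy of a matrix: `−∑ λᵢ log λᵢ` over its eigenvalues
(defined to be `0` if the matrix is not Hermitian). -/
noncomputable def matEntropy {ι : Type} [Fintype ι] [DecidableEq ι]
    (ρ : Matrix ι ι ℂ) : ℝ :=
  if h : ρ.IsHermitian then ∑ i, Real.negMulLog (h.eigenvalues i) else 0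

/-- A density matrix: positive semidefinite with unit trace. -/
def IsDensityMatrix {ι : Type} [Fintype ι] (ρ : Matrix ι ι ℂ) : Prop :=
  ρ.PosSemidef ∧ ρ.trace = 1

instance sumElimFintype {κ π : Type} {α : κ → Type} {δ : π → Type}
    [∀ i, Fintype (α i)] [∀ k, Fintype (δ k)] :
    ∀ i : κ ⊕ π, Fintype (Sum.elim α δ i)
  | .inl a => inferInstanceAs (Fintype (α a))
  | .inr b => inferInstanceAs (Fintype (δ b))

instance sumElimDecEq {κ π : Type} {α : κ → Type} {δ : π → Type}
    [∀ i, DecidableEq (α i)] [∀ k, DecidableEq (δ k)] :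
    ∀ i : κ ⊕ π, DecidableEq (Sum.elim α δ i)
  | .inl a => inferInstanceAs (DecidableEq (α a))
  | .inr b => inferInstanceAs (DecidableEq (δ b))

/-- Reduced density matrix on the subsystems in `s` (partial trace over the rest). -/
noncomputable def reduce {κ : Type} [Fintype κ] [DecidableEq κ] {α : κ → Type}
    [∀ i, Fintype (α i)] (s : Finset κ)
    (ρ : Matrix (∀ i, α i) (∀ i, α i) ℂ) :
    Matrix (∀ i : {j // j ∈ s}, α i.1) (∀ i : {j // j ∈ s}, α i.1) ℂ :=
  Matrix.of fun f g => ∑ h : ∀ i : {j // j ∉ s}, α i.1,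
    ρ (fun i => if hi : i ∈ s then f ⟨i, hi⟩ else h ⟨i, hi⟩)
      (fun i => if hi : i ∈ s then g ⟨i, hi⟩ else h ⟨i, hi⟩)

/-- The (pure) density matrix `|ψ⟩⟨ψ|` of a state vector. -/
def vecState {ι : Type} (ψ : ι → ℂ) : Matrix ι ι ℂ :=
  Matrix.of fun x y => ψ x * star (ψ y)

/-- Multipartite mutual information `∑ᵢ S_{Aᵢ} − S_{A₁⋯Aₙ}`. -/
noncomputable def Imulti {κ : Type} [Fintype κ] [DecidableEq κ] {α : κ → Type}
    [∀ i, Fintype (α i)] [∀ i, DecidableEq (α i)]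
    (ρ : Matrix (∀ i, α i) (∀ i, α i) ℂ) : ℝ :=
  (∑ i, matEntropy (reduce {i} ρ)) - matEntropy ρ

/-- Merge an assignment on the original systems with one on the ancillas. -/
def mergeSum {κ π : Type} {α : κ → Type} {δ : π → Type}
    (f : ∀ i, α i) (h : ∀ k, δ k) : ∀ i : κ ⊕ π, Sum.elim α δ i
  | .inl a => f a
  | .inr b => h b

/-- The subsystems belonging to party `k` together with its ancilla. -/
def partyFinset {κ π : Type} [Fintype κ] [DecidableEq κ] [DecidableEq π]
    (p : κ → π) (k : π) : Finset (κ ⊕ π) :=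
  (Finset.univ.filter fun i => p i = k).image Sum.inl ∪ {Sum.inr k}

/-- `ψ` (on the original systems plus one ancilla `Fin (d k)` per party)
purifies `ρ`: tracing out all ancillas from `|ψ⟩⟨ψ|` gives back `ρ`. -/
def Purifies {κ π : Type} [Fintype κ] {α : κ → Type} [∀ i, Fintype (α i)]
    [Fintype π] [DecidableEq π] {d : π → ℕ}
    (ψ : (∀ i : κ ⊕ π, Sum.elim α (fun k => Fin (d k)) i) → ℂ)
    (ρ : Matrix (∀ i, α i) (∀ i, α i) ℂ) : Prop :=
  ∀ f g, (∑ h : ∀ k, Fin (d k), vecState ψ (mergeSum f h) (mergeSum g h)) = ρ f g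

/-- Multipartite entanglement of purification for the partition of the systems `κ`
into parties `π` given by `p`: the infimum over all purifications (with one ancilla
per party, of arbitrary finite dimension) of `∑ₖ S_{AₖAₖ'}`. -/
noncomputable def DeltaPart {κ π : Type} [Fintype κ] [DecidableEq κ]
    [Fintype π] [DecidableEq π] {α : κ → Type}
    [∀ i, Fintype (α i)] [∀ i, DecidableEq (α i)]
    (p : κ → π) (ρ : Matrix (∀ i, α i) (∀ i, α i) ℂ) : ℝ :=
  sInf { x | ∃ (d : π → ℕ) (ψ : (∀ i : κ ⊕ π, Sum.elim α (fun k => Fin (d k)) i) → ℂ),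
    Purifies ψ ρ ∧
    x = ∑ k : π, matEntropy (reduce (partyFinset p k) (vecState ψ)) }

/-- Bipartite-style entanglement of purification for the partition `p`:
the infimum over purifications of the entropy of the single party `k₀`
together with its ancilla. -/
noncomputable def EPart {κ π : Type} [Fintype κ] [DecidableEq κ]
    [Fintype π] [DecidableEq π] {α : κ → Type}
    [∀ i, Fintype (α i)] [∀ i, DecidableEq (α i)]
    (p : κ → π) (k₀ : π) (ρ : Matrix (∀ i, α i) (∀ i, α i) ℂ) : ℝ :=
  sInf { x | ∃ (d : π → ℕ) (ψ : (∀ i : κ ⊕ π, Sum.elim α (fun k => Fin (d k)) i) → ℂ),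
    Purifies ψ ρ ∧
    x = matEntropy (reduce (partyFinset p k₀) (vecState ψ)) }

open Polynomial Matrix

section Spec

lemma smul_one_eq_scalar {n : Type} [Fintype n] [DecidableEq n] :
    (X : ℂ[X]) • (1 : Matrix n n ℂ[X]) = Matrix.scalar n (X : ℂ[X]) := by
  simp [Matrix.scalar_apply, Matrix.smul_eq_diagonal_mul]

lemma charpoly_mul_X_pow {n m : Type} [Fintype n] [Fintype m] [DecidableEq n] [DecidableEq m]
    (A : Matrix n m ℂ) (B : Matrix m n ℂ) :
    X ^ (Fintype.card n) * (B * A).charpoly = X ^ (Fintype.card m) * (A * B).charpoly := by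
  classical
  set A' : Matrix n m ℂ[X] := A.map C with hA'
  set B' : Matrix m n ℂ[X] := B.map C with hB'
  set M1 : Matrix (n ⊕ m) (n ⊕ m) ℂ[X] := fromBlocks ((X:ℂ[X]) • 1) A' B' 1 with hM1
  set N : Matrix (n ⊕ m) (n ⊕ m) ℂ[X] := fromBlocks 1 (-A') 0 ((X:ℂ[X]) • 1) with hN
  have hBA : charmatrix (B * A) = (X:ℂ[X]) • 1 - B' * A' := by
    rw [charmatrix, smul_one_eq_scalar]
    congr 1
    simp [hA', hB', Matrix.map_mul]
  have hAB : charmatrix (A * B) = (X:ℂ[X]) • 1 - A' * B' := by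
    rw [charmatrix, smul_one_eq_scalar]
    congr 1
    simp [hA', hB', Matrix.map_mul]
  have h1 : M1 * N = fromBlocks ((X:ℂ[X]) • 1) 0 B' (charmatrix (B * A)) := by
    rw [hM1, hN, fromBlocks_multiply, hBA]
    congr 1 <;>
      simp [Matrix.mul_smul, Matrix.smul_mul, sub_eq_neg_add, add_comm]
  have h2 : N * M1 = fromBlocks (charmatrix (A * B)) 0 ((X:ℂ[X]) • B') ((X:ℂ[X]) • 1) := by
    rw [hM1, hN, fromBlocks_multiply, hAB]
    congr 1 <;>
      simp [Matrix.mul_smul, Matrix.smul_mul, sub_eq_neg_add, add_comm]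
  have hd : (M1 * N).det = (N * M1).det := by
    rw [Matrix.det_mul, Matrix.det_mul, mul_comm]
  rw [h1, h2, det_fromBlocks_zero₁₂, det_fromBlocks_zero₁₂] at hd
  simpa [Matrix.det_smul, Matrix.charpoly, mul_comm] using hd

lemma charmatrix_diagonal {n : Type} [Fintype n] [DecidableEq n] (d : n → ℂ) :
    charmatrix (diagonal d) = diagonal fun i => (X : ℂ[X]) - C (d i) := by
  ext i j
  by_cases h : i = j
  · subst h; simp
  · simp [h, diagonal_apply_ne _ h]

lemma charpoly_isHermitian {n : Type} [Fintype n] [DecidableEq n] {A : Matrix n n ℂ}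
    (hA : A.IsHermitian) :
    A.charpoly = ∏ i, (X - C (hA.eigenvalues i : ℂ)) := by
  set U : Matrix n n ℂ := (hA.eigenvectorUnitary : Matrix n n ℂ) with hU
  set D : Matrix n n ℂ := diagonal (RCLike.ofReal ∘ hA.eigenvalues) with hD
  have hsp : A = U * D * star U := hA.spectral_theorem
  set V : Matrix n n ℂ[X] := U.map C with hV
  set W : Matrix n n ℂ[X] := (star U).map C with hW
  have hVW : V * W = 1 := by
    rw [hV, hW, ← Matrix.map_mul]
    · rw [(Matrix.mem_unitaryGroup_iff).mp hA.eigenvectorUnitary.2]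
      simp
  have hWV : W * V = 1 := by
    rw [hV, hW, ← Matrix.map_mul]
    · rw [(Matrix.mem_unitaryGroup_iff').mp hA.eigenvectorUnitary.2]
      simp
  have hch : charmatrix A = V * charmatrix D * W := by
    have e1 : charmatrix A = (X:ℂ[X]) • (1: Matrix n n ℂ[X]) - A.map C := by
      rw [charmatrix, ← smul_one_eq_scalar]; rfl
    have e2 : charmatrix D = (X:ℂ[X]) • (1: Matrix n n ℂ[X]) - D.map C := by
      rw [charmatrix, ← smul_one_eq_scalar]; rfl
    rw [e1, e2, Matrix.mul_sub, Matrix.sub_mul]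
    congr 1
    · rw [Matrix.mul_smul, Matrix.smul_mul, Matrix.mul_one, hVW]
    · rw [hsp, hV, hW, ← Matrix.map_mul, ← Matrix.map_mul]
  have := congrArg Matrix.det hch
  rw [Matrix.det_mul, Matrix.det_mul] at this
  rw [Matrix.charpoly, this, mul_comm (V.det * _) W.det, ← mul_assoc, ← Matrix.det_mul, hWV]
  rw [Matrix.det_one, one_mul, _root_.charmatrix_diagonal, Matrix.det_diagonal]
  rfl

lemma sum_negMulLog_eigenvalues_eq_roots {n : Type} [Fintype n] [DecidableEq n]
    {A : Matrix n n ℂ} (hA : A.IsHermitian) :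
    ∑ i, Real.negMulLog (hA.eigenvalues i)
      = (A.charpoly.roots.map fun z : ℂ => Real.negMulLog z.re).sum := by
  have h : A.charpoly.roots = (Finset.univ.val.map fun i => (hA.eigenvalues i : ℂ)) := by
    rw [charpoly_isHermitian hA, Finset.prod_eq_multiset_prod]
    have : Multiset.map (fun i => X - C ((hA.eigenvalues i : ℂ))) Finset.univ.val
        = Multiset.map (fun z => X - C z) (Finset.univ.val.map fun i => ((hA.eigenvalues i : ℂ)))
        := by rw [Multiset.map_map]; rfl
    rw [this, Polynomial.roots_multiset_prod_X_sub_C]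
  rw [h, Multiset.map_map, Finset.sum_eq_multiset_sum]
  congr 1

lemma entropy_sum_eq_of_charpoly {n m : Type} [Fintype n] [Fintype m] [DecidableEq n]
    [DecidableEq m] {A : Matrix n n ℂ} {B : Matrix m m ℂ}
    (hA : A.IsHermitian) (hB : B.IsHermitian) {a b : ℕ}
    (h : X ^ a * A.charpoly = X ^ b * B.charpoly) :
    ∑ i, Real.negMulLog (hA.eigenvalues i) = ∑ i, Real.negMulLog (hB.eigenvalues i) := by
  rw [sum_negMulLog_eigenvalues_eq_roots hA, sum_negMulLog_eigenvalues_eq_roots hB]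
  have hr : ∀ (k : Type) [Fintype k] [DecidableEq k] (M : Matrix k k ℂ) (c : ℕ),
      ((X ^ c * M.charpoly).roots.map fun z : ℂ => Real.negMulLog z.re).sum
        = (M.charpoly.roots.map fun z : ℂ => Real.negMulLog z.re).sum := by
    intro k _ _ M c
    rw [Polynomial.roots_mul (by
      apply mul_ne_zero (pow_ne_zero _ Polynomial.X_ne_zero) (M.charpoly_monic.ne_zero))]
    rw [Polynomial.roots_pow, Polynomial.roots_X, Multiset.map_add, Multiset.sum_add,
      Multiset.map_nsmul, Multiset.map_singleton, Multiset.sum_nsmul]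
    simp [Real.negMulLog_zero]
  rw [← hr n A a, ← hr m B b, h]

end Spec

lemma matEntropy_eq_of_charpoly {n m : Type} [Fintype n] [Fintype m] [DecidableEq n]
    [DecidableEq m] {A : Matrix n n ℂ} {B : Matrix m m ℂ}
    (hA : A.IsHermitian) (hB : B.IsHermitian) {a b : ℕ}
    (h : X ^ a * A.charpoly = X ^ b * B.charpoly) :
    matEntropy A = matEntropy B := by
  rw [matEntropy, matEntropy, dif_pos hA, dif_pos hB]
  exact entropy_sum_eq_of_charpoly hA hB h

lemma matEntropy_reindex {n m : Type} [Fintype n] [Fintype m] [DecidableEq n]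
    [DecidableEq m] (e : n ≃ m) (A : Matrix n n ℂ) :
    matEntropy (reindex e e A) = matEntropy A := by
  by_cases hA : A.IsHermitian
  · have hB : (reindex e e A).IsHermitian := by
      rw [reindex_apply]
      exact (isHermitian_submatrix_equiv e.symm).mpr hA
    exact matEntropy_eq_of_charpoly hB hA (a := 0) (b := 0)
      (by rw [Matrix.charpoly_reindex])
  · have hB : ¬ (reindex e e A).IsHermitian := by
      rw [reindex_apply]
      exact fun hc => hA ((isHermitian_submatrix_equiv e.symm).mp hc)
    rw [matEntropy, matEntropy, dif_neg hA, dif_neg hB]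

lemma matEntropy_mul_conjTranspose {n m : Type} [Fintype n] [Fintype m] [DecidableEq n]
    [DecidableEq m] (M : Matrix n m ℂ) :
    matEntropy (M * Mᴴ) = matEntropy (Mᴴ * M) :=
  matEntropy_eq_of_charpoly (isHermitian_mul_conjTranspose_self M)
    ((isHermitian_conjTranspose_mul_self M)) (charpoly_mul_X_pow M Mᴴ).symm

lemma matEntropy_nonneg {n : Type} [Fintype n] [DecidableEq n] {A : Matrix n n ℂ}
    (hA : A.PosSemidef) (ht : A.trace = 1) : 0 ≤ matEntropy A := by
  rw [matEntropy, dif_pos hA.1]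
  have htr : ∑ i, hA.1.eigenvalues i = 1 := by
    have : A = (hA.1.eigenvectorUnitary : Matrix n n ℂ) * Matrix.diagonal (RCLike.ofReal ∘ hA.1.eigenvalues) * star (hA.1.eigenvectorUnitary : Matrix n n ℂ) := hA.1.spectral_theorem
    have h2 : A.trace = (Matrix.diagonal (RCLike.ofReal ∘ hA.1.eigenvalues)).trace := by
      conv_lhs => rw [this]
      rw [Matrix.trace_mul_comm, ← Matrix.mul_assoc,
        (Matrix.mem_unitaryGroup_iff').mp hA.1.eigenvectorUnitary.2, Matrix.one_mul]
    rw [ht, Matrix.trace_diagonal] at h2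
    have := congrArg Complex.re h2.symm
    simpa using this
  apply Finset.sum_nonneg
  intro i _
  apply Real.negMulLog_nonneg (hA.eigenvalues_nonneg i)
  calc hA.1.eigenvalues i ≤ ∑ j, hA.1.eigenvalues j := by
        apply Finset.single_le_sum (fun j _ => hA.eigenvalues_nonneg j) (Finset.mem_univ i)
    _ = 1 := htr

section PartC

variable {κ : Type} [Fintype κ] [DecidableEq κ] {β : κ → Type} [∀ i, Fintype (β i)]

/-- Assembling a function from its restriction to `s` and to the complement. -/
def asmEquiv (s : Finset κ) :
    ((∀ i : {j // j ∈ s}, β i.1) × (∀ i : {j // j ∉ s}, β i.1)) ≃ (∀ i, β i) where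
  toFun fh := fun i => if hi : i ∈ s then fh.1 ⟨i, hi⟩ else fh.2 ⟨i, hi⟩
  invFun x := (fun i => x i.1, fun i => x i.1)
  left_inv := by
    rintro ⟨f, h⟩
    refine Prod.ext (funext fun i => ?_) (funext fun i => ?_)
    · simp [i.2]
    · simp [i.2]
  right_inv := by
    intro x
    funext i
    by_cases hi : i ∈ s <;> simp [hi]

lemma reduce_apply (s : Finset κ) (σ : Matrix (∀ i, β i) (∀ i, β i) ℂ)
    (f g : ∀ i : {j // j ∈ s}, β i.1) :
    reduce s σ f g = ∑ h : ∀ i : {j // j ∉ s}, β i.1,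
      σ (asmEquiv s (f, h)) (asmEquiv s (g, h)) := rfl

lemma trace_reduce (s : Finset κ) (σ : Matrix (∀ i, β i) (∀ i, β i) ℂ) :
    (reduce s σ).trace = σ.trace := by
  rw [Matrix.trace, Matrix.trace]
  simp only [Matrix.diag]
  rw [← Equiv.sum_comp (asmEquiv s (β := β)) (fun x => σ x x), Fintype.sum_prod_type]
  rfl

lemma reduce_isHermitian (s : Finset κ) {σ : Matrix (∀ i, β i) (∀ i, β i) ℂ}
    (hσ : σ.IsHermitian) : (reduce s σ).IsHermitian := by
  refine Matrix.IsHermitian.ext fun f g => ?_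
  rw [reduce_apply, reduce_apply, star_sum]
  refine Finset.sum_congr rfl fun h _ => ?_
  exact hσ.apply _ _

lemma reduce_vecState (s : Finset κ) (ψ : (∀ i, β i) → ℂ) :
    reduce s (vecState ψ) =
      (Matrix.of fun f (h : ∀ i : {j // j ∉ s}, β i.1) => ψ (asmEquiv s (f, h))) *
      (Matrix.of fun f (h : ∀ i : {j // j ∉ s}, β i.1) => ψ (asmEquiv s (f, h)))ᴴ := by
  ext f g
  rw [reduce_apply, Matrix.mul_apply]
  refine Finset.sum_congr rfl fun h _ => ?_
  simp [vecState, Matrix.conjTranspose_apply]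

lemma matEntropy_reduce_vecState_nonneg [∀ i, DecidableEq (β i)] (s : Finset κ)
    (ψ : (∀ i, β i) → ℂ) (htr : (vecState ψ).trace = 1) :
    0 ≤ matEntropy (reduce s (vecState ψ)) := by
  rw [reduce_vecState]
  refine matEntropy_nonneg (Matrix.posSemidef_self_mul_conjTranspose _) ?_
  rw [← reduce_vecState, trace_reduce, htr]

end PartC

section PartC2

variable {κ π : Type} [Fintype κ] [DecidableEq κ] {α : κ → Type} [∀ i, Fintype (α i)]
    [Fintype π] [DecidableEq π] {d : π → ℕ}

/-- Splitting a global assignment into system and ancilla parts. -/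
def mergeEquiv (α : κ → Type) (d : π → ℕ) :
    ((∀ i, α i) × (∀ k, Fin (d k))) ≃ (∀ i : κ ⊕ π, Sum.elim α (fun k => Fin (d k)) i) where
  toFun fh := mergeSum fh.1 fh.2
  invFun x := (fun a => x (.inl a), fun b => x (.inr b))
  left_inv := by rintro ⟨f, h⟩; rfl
  right_inv := by
    intro x
    funext i
    rcases i with a | b <;> rfl

lemma trace_vecState_of_purifies
    (ψ : (∀ i : κ ⊕ π, Sum.elim α (fun k => Fin (d k)) i) → ℂ)
    (ρ : Matrix (∀ i, α i) (∀ i, α i) ℂ) (hpur : Purifies ψ ρ) :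
    (vecState ψ).trace = ρ.trace := by
  rw [Matrix.trace, Matrix.trace]
  simp only [Matrix.diag]
  rw [← Equiv.sum_comp (mergeEquiv α d) (fun x => vecState ψ x x), Fintype.sum_prod_type]
  exact Finset.sum_congr rfl fun f _ => hpur f f

end PartC2

section PartB2
variable {n m : Type} [Fintype n] [Fintype m] [DecidableEq n] [DecidableEq m]

lemma charpoly_transpose (M : Matrix n n ℂ) : Mᵀ.charpoly = M.charpoly := by
  rw [Matrix.charpoly, Matrix.charpoly, ← Matrix.det_transpose (charmatrix M)]
  congr 1
  ext i j
  by_cases h : i = j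
  · subst h; simp
  · simp [charmatrix_apply, Matrix.diagonal_apply_ne _ h,
      Matrix.diagonal_apply_ne _ (Ne.symm h), h, Ne.symm h]

lemma matEntropy_transpose {B : Matrix n n ℂ} (hB : B.IsHermitian) :
    matEntropy Bᵀ = matEntropy B :=
  matEntropy_eq_of_charpoly hB.transpose hB (a := 0) (b := 0)
    (by rw [_root_.charpoly_transpose])

lemma matEntropy_congr (e : n ≃ m) {A : Matrix n n ℂ} {B : Matrix m m ℂ}
    (h : ∀ i j, A i j = B (e i) (e j)) : matEntropy A = matEntropy B := by
  have hA : A = Matrix.reindex e.symm e.symm B := by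
    ext i j
    simp [h i j]
  rw [hA, matEntropy_reindex]

lemma matEntropy_congr_star (e : n ≃ m) {A : Matrix n n ℂ} {B : Matrix m m ℂ}
    (hB : B.IsHermitian) (h : ∀ i j, A i j = star (B (e i) (e j))) :
    matEntropy A = matEntropy B := by
  have h2 : ∀ i j, A i j = Bᵀ (e i) (e j) := by
    intro i j
    rw [h i j, Matrix.transpose_apply, hB.apply]
  rw [matEntropy_congr e h2, matEntropy_transpose hB]

end PartB2

section PartC3
variable {κ : Type} [Fintype κ] [DecidableEq κ] {β : κ → Type} [∀ i, Fintype (β i)]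

lemma asmEquiv_apply_of_mem (s : Finset κ) (f : ∀ i : {j // j ∈ s}, β i.1)
    (h : ∀ i : {j // j ∉ s}, β i.1) {i : κ} (hi : i ∈ s) :
    asmEquiv s (f, h) i = f ⟨i, hi⟩ := dif_pos hi

lemma asmEquiv_apply_of_not_mem (s : Finset κ) (f : ∀ i : {j // j ∈ s}, β i.1)
    (h : ∀ i : {j // j ∉ s}, β i.1) {i : κ} (hi : i ∉ s) :
    asmEquiv s (f, h) i = h ⟨i, hi⟩ := dif_neg hi

end PartC3

lemma rho_apply {K : Type} [Fintype K] [DecidableEq K] {ρ : Matrix K K ℂ}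
    (hH : ρ.IsHermitian) (a b : K) :
    ρ a b = ∑ m, (hH.eigenvalues m : ℂ) *
      ((hH.eigenvectorUnitary : Matrix K K ℂ) a m *
        star ((hH.eigenvectorUnitary : Matrix K K ℂ) b m)) := by
  have hsp : ρ = (hH.eigenvectorUnitary : Matrix K K ℂ) * Matrix.diagonal (RCLike.ofReal ∘ hH.eigenvalues) * star (hH.eigenvectorUnitary : Matrix K K ℂ) := hH.spectral_theorem
  conv_lhs => rw [hsp]
  rw [Matrix.mul_apply]
  refine Finset.sum_congr rfl fun m _ => ?_
  rw [Matrix.mul_diagonal, Matrix.star_apply]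
  simp only [Function.comp_apply, RCLike.ofReal_alg]
  ring_nf
  simp [mul_comm, mul_assoc, mul_left_comm]

lemma halg (a : ℝ) (ha : 0 ≤ a) (z w : ℂ) :
    ((Real.sqrt a : ℂ) * z) * star ((Real.sqrt a : ℂ) * w) = (a : ℂ) * (z * star w) := by
  rw [star_mul']
  rw [show ((Real.sqrt a : ℂ)) * z * (star ((Real.sqrt a : ℂ)) * star w)
      = (((Real.sqrt a : ℂ)) * star ((Real.sqrt a : ℂ))) * (z * star w) from by ring]
  congr 1
  rw [Complex.star_def, Complex.conj_ofReal, ← Complex.ofReal_mul, Real.mul_self_sqrt ha]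

lemma finOne_eq {n : ℕ} (hn : n = 1) (a b : Fin n) : a = b := by
  subst hn
  exact Subsingleton.elim a b

lemma halg2 (a : ℝ) (ha : 0 ≤ a) (z w : ℂ) :
    star ((Real.sqrt a : ℂ) * z) * ((Real.sqrt a : ℂ) * w) = (a : ℂ) * (star z * w) := by
  rw [star_mul']
  rw [show star ((Real.sqrt a : ℂ)) * star z * ((Real.sqrt a : ℂ) * w)
      = (((Real.sqrt a : ℂ)) * star ((Real.sqrt a : ℂ))) * (star z * w) from by ring]
  congr 1
  rw [Complex.star_def, Complex.conj_ofReal, ← Complex.ofReal_mul, Real.mul_self_sqrt ha]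

lemma partyFinset_id (k : Fin 3) :
    partyFinset (id : Fin 3 → Fin 3) k = {Sum.inl k, Sum.inr k} := by
  ext x
  rcases x with i | i <;> simp [partyFinset, eq_comm]

set_option maxHeartbeats 2000000 in
lemma key {α : Fin 3 → Type} [∀ i, Fintype (α i)] [∀ i, DecidableEq (α i)]
    (ρ : Matrix (∀ i, α i) (∀ i, α i) ℂ) (hρ : IsDensityMatrix ρ) (k₀ : Fin 3) :
    DeltaPart id ρ ≤ (∑ k ∈ Finset.univ.erase k₀, matEntropy (reduce {k} ρ))
      + matEntropy (reduce ({k₀}ᶜ : Finset (Fin 3)) ρ) := by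
  classical
  have hH : ρ.IsHermitian := hρ.1.1
  set p : (∀ i, α i) → ℝ := hH.eigenvalues with hp
  have hp0 : ∀ m, 0 ≤ p m := fun m => hρ.1.eigenvalues_nonneg m
  set U : Matrix (∀ i, α i) (∀ i, α i) ℂ := ((hH.eigenvectorUnitary : unitaryGroup (∀ i, α i) ℂ) : Matrix (∀ i, α i) (∀ i, α i) ℂ) with hUdef
  set N := Fintype.card (∀ i, α i) with hN
  set d : Fin 3 → ℕ := fun k => if k = k₀ then N else 1 with hd
  have hdk0 : d k₀ = N := by simp [hd]
  have hd1 : ∀ k, k ≠ k₀ → d k = 1 := fun k hk => by simp [hd, hk]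
  set eK : Fin (d k₀) ≃ (∀ i, α i) := (finCongr hdk0).trans (Fintype.equivFin _).symm with heK
  set ψ : (∀ i : Fin 3 ⊕ Fin 3, Sum.elim α (fun k => Fin (d k)) i) → ℂ :=
    fun x => (Real.sqrt (p (eK (x (Sum.inr k₀)))) : ℂ) *
      U (fun i => x (Sum.inl i)) (eK (x (Sum.inr k₀))) with hψ
  have hrho : ∀ a b, ρ a b = ∑ m, (p m : ℂ) * (U a m * star (U b m)) :=
    fun a b => rho_apply hH a b
  -- Purifies
  have hpur : Purifies ψ ρ := by
    intro f g
    have hsum : ∀ (h : ∀ k, Fin (d k)),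
        vecState ψ (mergeSum f h) (mergeSum g h)
          = (p (eK (h k₀)) : ℂ) * (U f (eK (h k₀)) * star (U g (eK (h k₀)))) := by
      intro h
      show ψ (mergeSum f h) * star (ψ (mergeSum g h)) = _
      have e1 : ψ (mergeSum f h)
          = (Real.sqrt (p (eK (h k₀))) : ℂ) * U f (eK (h k₀)) := rfl
      have e2 : ψ (mergeSum g h)
          = (Real.sqrt (p (eK (h k₀))) : ℂ) * U g (eK (h k₀)) := rfl
      rw [e1, e2, halg _ (hp0 _)]
    set Φ : (∀ k, Fin (d k)) ≃ Fin (d k₀) :=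
      { toFun := fun h => h k₀
        invFun := fun j k => if hk : k = k₀ then Fin.cast (by rw [hk]) j
          else ⟨0, by rw [hd1 k hk]; norm_num⟩
        left_inv := by
          intro h; funext k
          by_cases hk : k = k₀
          · subst hk; simp
          · simp only [dif_neg hk]
            have h1 := (h k).isLt
            have h2 := hd1 k hk
            exact Fin.ext (by omega)
        right_inv := by
          intro j
          simp } with hΦ
    calc ∑ h : ∀ k, Fin (d k), vecState ψ (mergeSum f h) (mergeSum g h)
        = ∑ j : Fin (d k₀), (p (eK j) : ℂ) * (U f (eK j) * star (U g (eK j))) := by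
          refine Fintype.sum_equiv Φ _ _ fun h => ?_
          rw [hsum h]
          rfl
      _ = ∑ m, (p m : ℂ) * (U f m * star (U g m)) :=
          Equiv.sum_comp eK (fun m => (p m : ℂ) * (U f m * star (U g m)))
      _ = ρ f g := (hrho f g).symm
  -- entropy of each party's reduced state
  have hval : ∀ k : Fin 3, matEntropy (reduce (partyFinset id k) (vecState ψ))
      = if k = k₀ then matEntropy (reduce ({k₀}ᶜ : Finset (Fin 3)) ρ)
        else matEntropy (reduce ({k} : Finset (Fin 3)) ρ) := by
    intro k
    rw [partyFinset_id]
    have hmem_inl : ∀ i : Fin 3,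
        Sum.inl i ∈ ({Sum.inl k, Sum.inr k} : Finset (Fin 3 ⊕ Fin 3)) ↔ i = k := by
      intro i; simp
    have hmem_inr : ∀ i : Fin 3,
        Sum.inr i ∈ ({Sum.inl k, Sum.inr k} : Finset (Fin 3 ⊕ Fin 3)) ↔ i = k := by
      intro i; simp
    by_cases hk : k = k₀
    · -- the party holding the big ancilla
      subst hk
      rw [if_pos rfl]
      rw [reduce_vecState, matEntropy_mul_conjTranspose]
      set Eg : (∀ i : {j // j ∉ ({Sum.inl k, Sum.inr k} : Finset (Fin 3 ⊕ Fin 3))},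
            Sum.elim α (fun k' => Fin (d k')) i.1) ≃
          (∀ i : {j : Fin 3 // j ∈ ({k}ᶜ : Finset (Fin 3))}, α i.1) :=
        { toFun := fun h i => h ⟨Sum.inl i.1,
            fun hc => (Finset.mem_compl.mp i.2) (Finset.mem_singleton.mpr ((hmem_inl i.1).mp hc))⟩
          invFun := fun g jj => match jj with
            | ⟨Sum.inl i', hi⟩ => g ⟨i', Finset.mem_compl.mpr
                (fun hc => hi ((hmem_inl i').mpr (Finset.mem_singleton.mp hc)))⟩
            | ⟨Sum.inr k', hi⟩ => (⟨0, by
                rw [hd1 k' (fun hc => hi ((hmem_inr k').mpr hc))]; norm_num⟩ : Fin (d k'))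
          left_inv := by
            intro h
            funext jj
            obtain ⟨j, hj⟩ := jj
            rcases j with i | i
            · rfl
            · exact finOne_eq (hd1 i (fun hc => hj ((hmem_inr i).mpr hc))) _ _
          right_inv := fun g => rfl } with hEg
      set Ep : (∀ i : {j // j ∈ ({Sum.inl k, Sum.inr k} : Finset (Fin 3 ⊕ Fin 3))},
            Sum.elim α (fun k' => Fin (d k')) i.1) ≃
          ((∀ i : {j : Fin 3 // j ∉ ({k}ᶜ : Finset (Fin 3))}, α i.1) × Fin (d k)) :=
        { toFun := fun f =>
            (fun i => f ⟨Sum.inl i.1, (hmem_inl i.1).mpr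
              (Finset.mem_singleton.mp (Finset.notMem_compl.mp i.2))⟩,
             f ⟨Sum.inr k, (hmem_inr k).mpr rfl⟩)
          invFun := fun cj jj => match jj with
            | ⟨Sum.inl i', hi⟩ => cj.1 ⟨i', Finset.notMem_compl.mpr
                (Finset.mem_singleton.mpr ((hmem_inl i').mp hi))⟩
            | ⟨Sum.inr k', hi⟩ => Fin.cast (show d k = d k' by
                rw [(hmem_inr k').mp hi]) cj.2
          left_inv := by
            intro f
            funext jj
            obtain ⟨j, hj⟩ := jj
            rcases j with i | i
            · rfl
            · have hik : i = k := (hmem_inr i).mp hj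
              subst hik
              exact Fin.ext rfl
          right_inv := by
            rintro ⟨c, j⟩
            exact Prod.ext (funext fun i => rfl) (Fin.ext rfl) } with hEp
      refine matEntropy_congr_star Eg (reduce_isHermitian _ hH) ?_
      intro h h'
      rw [Matrix.mul_apply]
      simp only [Matrix.conjTranspose_apply, Matrix.of_apply]
      rw [reduce_apply, star_sum]
      have hterm : ∀ f, star (ψ (asmEquiv ({Sum.inl k, Sum.inr k} :
              Finset (Fin 3 ⊕ Fin 3)) (f, h))) *
            ψ (asmEquiv ({Sum.inl k, Sum.inr k} : Finset (Fin 3 ⊕ Fin 3)) (f, h'))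
          = (p (eK ((Ep f).2)) : ℂ) *
            (star (U (asmEquiv (({k}ᶜ : Finset (Fin 3))) (Eg h, (Ep f).1)) (eK ((Ep f).2))) *
             U (asmEquiv (({k}ᶜ : Finset (Fin 3))) (Eg h', (Ep f).1)) (eK ((Ep f).2))) := by
        intro f
        have e1 : ∀ hh, ψ (asmEquiv ({Sum.inl k, Sum.inr k} :
              Finset (Fin 3 ⊕ Fin 3)) (f, hh))
            = (Real.sqrt (p (eK ((Ep f).2))) : ℂ) *
              U (asmEquiv (({k}ᶜ : Finset (Fin 3))) (Eg hh, (Ep f).1)) (eK ((Ep f).2)) := by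
          intro hh
          have hx : (asmEquiv ({Sum.inl k, Sum.inr k} :
              Finset (Fin 3 ⊕ Fin 3)) (f, hh)) (Sum.inr k) = (Ep f).2 :=
            asmEquiv_apply_of_mem _ f hh ((hmem_inr k).mpr rfl)
          have hfun : (fun i => (asmEquiv ({Sum.inl k, Sum.inr k} :
                Finset (Fin 3 ⊕ Fin 3)) (f, hh)) (Sum.inl i))
              = asmEquiv (({k}ᶜ : Finset (Fin 3))) (Eg hh, (Ep f).1) := by
            funext i
            by_cases hik : i = k
            · subst hik
              rw [asmEquiv_apply_of_mem _ f hh ((hmem_inl i).mpr rfl),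
                asmEquiv_apply_of_not_mem _ _ _
                  (Finset.notMem_compl.mpr (Finset.mem_singleton_self i))]
              rfl
            · rw [asmEquiv_apply_of_not_mem _ f hh (fun hc => hik ((hmem_inl i).mp hc)),
                asmEquiv_apply_of_mem _ _ _
                  (Finset.mem_compl.mpr (fun hc => hik (Finset.mem_singleton.mp hc)))]
              rfl
          show (Real.sqrt (p (eK ((asmEquiv _ (f, hh)) (Sum.inr k)))) : ℂ) *
              U (fun i => (asmEquiv _ (f, hh)) (Sum.inl i))
                (eK ((asmEquiv _ (f, hh)) (Sum.inr k))) = _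
          rw [hx, hfun]
        rw [e1 h, e1 h', halg2 _ (hp0 _)]
      calc (∑ f, star (ψ (asmEquiv _ (f, h))) * ψ (asmEquiv _ (f, h')))
          = ∑ x : (∀ i : {j : Fin 3 // j ∉ ({k}ᶜ : Finset (Fin 3))}, α i.1) × Fin (d k),
              (p (eK x.2) : ℂ) *
              (star (U (asmEquiv (({k}ᶜ : Finset (Fin 3))) (Eg h, x.1)) (eK x.2)) *
               U (asmEquiv (({k}ᶜ : Finset (Fin 3))) (Eg h', x.1)) (eK x.2)) := by
            refine Fintype.sum_equiv Ep _ _ fun f => ?_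
            rw [hterm f]
        _ = ∑ c : (∀ i : {j : Fin 3 // j ∉ ({k}ᶜ : Finset (Fin 3))}, α i.1),
              ∑ j : Fin (d k), (p (eK j) : ℂ) *
              (star (U (asmEquiv (({k}ᶜ : Finset (Fin 3))) (Eg h, c)) (eK j)) *
               U (asmEquiv (({k}ᶜ : Finset (Fin 3))) (Eg h', c)) (eK j)) := by
            rw [Fintype.sum_prod_type]
        _ = ∑ c, star (ρ (asmEquiv (({k}ᶜ : Finset (Fin 3))) (Eg h, c))
              (asmEquiv (({k}ᶜ : Finset (Fin 3))) (Eg h', c))) := by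
            refine Finset.sum_congr rfl fun c _ => ?_
            rw [hrho, star_sum]
            rw [← Equiv.sum_comp eK (fun m => star ((p m : ℂ) *
              (U (asmEquiv (({k}ᶜ : Finset (Fin 3))) (Eg h, c)) m *
               star (U (asmEquiv (({k}ᶜ : Finset (Fin 3))) (Eg h', c)) m))))]
            refine Finset.sum_congr rfl fun j _ => ?_
            rw [star_mul', star_mul', star_star, Complex.star_def, Complex.conj_ofReal]
    · -- ordinary party
      rw [if_neg hk]
      set Ef : (∀ i : {j // j ∈ ({Sum.inl k, Sum.inr k} : Finset (Fin 3 ⊕ Fin 3))},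
            Sum.elim α (fun k' => Fin (d k')) i.1) ≃
          (∀ i : {j : Fin 3 // j ∈ ({k} : Finset (Fin 3))}, α i.1) :=
        { toFun := fun f i => f ⟨Sum.inl i.1, (hmem_inl i.1).mpr (Finset.mem_singleton.mp i.2)⟩
          invFun := fun g jj => match jj with
            | ⟨Sum.inl i', hi⟩ => g ⟨i', Finset.mem_singleton.mpr ((hmem_inl i').mp hi)⟩
            | ⟨Sum.inr k', hi⟩ => (⟨0, by
                rw [hd1 k' (by rw [(hmem_inr k').mp hi]; exact hk)]; norm_num⟩ : Fin (d k'))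
          left_inv := by
            intro f
            funext jj
            obtain ⟨j, hj⟩ := jj
            rcases j with i | i
            · rfl
            · exact finOne_eq (hd1 i (by rw [(hmem_inr i).mp hj]; exact hk)) _ _
          right_inv := fun g => rfl } with hEf
      set Eh : (∀ i : {j // j ∉ ({Sum.inl k, Sum.inr k} : Finset (Fin 3 ⊕ Fin 3))},
            Sum.elim α (fun k' => Fin (d k')) i.1) ≃
          ((∀ i : {j : Fin 3 // j ∉ ({k} : Finset (Fin 3))}, α i.1) × Fin (d k₀)) :=
        { toFun := fun h =>
            (fun i => h ⟨Sum.inl i.1,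
              fun hc => i.2 (Finset.mem_singleton.mpr ((hmem_inl i.1).mp hc))⟩,
             h ⟨Sum.inr k₀, fun hc => hk (((hmem_inr k₀).mp hc).symm)⟩)
          invFun := fun gj jj => match jj with
            | ⟨Sum.inl i', hi⟩ => gj.1 ⟨i',
                fun hc => hi ((hmem_inl i').mpr (Finset.mem_singleton.mp hc))⟩
            | ⟨Sum.inr k', hi⟩ => if hk' : k' = k₀ then Fin.cast (by rw [hk']) gj.2
                else (⟨0, by rw [hd1 k' hk']; norm_num⟩ : Fin (d k'))
          left_inv := by
            intro h
            funext jj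
            obtain ⟨j, hj⟩ := jj
            rcases j with i | i
            · rfl
            · by_cases hik : i = k₀
              · subst hik
                simp only [dif_pos]
                exact Fin.ext (by simp; rfl)
              · exact finOne_eq (hd1 i hik) _ _
          right_inv := by
            rintro ⟨g, j⟩
            refine Prod.ext (funext fun i => rfl) ?_
            simp only [dif_pos]
            exact Fin.ext (by simp) } with hEh
      have hEntry : ∀ f g,
          reduce ({Sum.inl k, Sum.inr k} : Finset (Fin 3 ⊕ Fin 3)) (vecState ψ) f g
            = reduce ({k} : Finset (Fin 3)) ρ (Ef f) (Ef g) := by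
        intro f g
        rw [reduce_apply, reduce_apply]
        have hterm : ∀ h, vecState ψ
              (asmEquiv ({Sum.inl k, Sum.inr k} : Finset (Fin 3 ⊕ Fin 3)) (f, h))
              (asmEquiv ({Sum.inl k, Sum.inr k} : Finset (Fin 3 ⊕ Fin 3)) (g, h))
            = (p (eK ((Eh h).2)) : ℂ) *
              (U (asmEquiv ({k} : Finset (Fin 3)) (Ef f, (Eh h).1)) (eK ((Eh h).2)) *
               star (U (asmEquiv ({k} : Finset (Fin 3)) (Ef g, (Eh h).1)) (eK ((Eh h).2)))) := by
          intro h
          have e1 : ∀ f', ψ (asmEquiv ({Sum.inl k, Sum.inr k} : Finset (Fin 3 ⊕ Fin 3)) (f', h))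
              = (Real.sqrt (p (eK ((Eh h).2))) : ℂ) *
                U (asmEquiv ({k} : Finset (Fin 3)) (Ef f', (Eh h).1)) (eK ((Eh h).2)) := by
            intro f'
            have hx : (asmEquiv ({Sum.inl k, Sum.inr k} : Finset (Fin 3 ⊕ Fin 3)) (f', h))
                (Sum.inr k₀) = (Eh h).2 :=
              asmEquiv_apply_of_not_mem _ f' h (fun hc => hk (((hmem_inr k₀).mp hc).symm))
            have hfun : (fun i => (asmEquiv ({Sum.inl k, Sum.inr k} :
                  Finset (Fin 3 ⊕ Fin 3)) (f', h)) (Sum.inl i))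
                = asmEquiv ({k} : Finset (Fin 3)) (Ef f', (Eh h).1) := by
              funext i
              by_cases hik : i = k
              · subst hik
                rw [asmEquiv_apply_of_mem _ f' h ((hmem_inl i).mpr rfl),
                  asmEquiv_apply_of_mem _ _ _ (Finset.mem_singleton_self i)]
                rfl
              · rw [asmEquiv_apply_of_not_mem _ f' h (fun hc => hik ((hmem_inl i).mp hc)),
                  asmEquiv_apply_of_not_mem _ _ _ (fun hc => hik (Finset.mem_singleton.mp hc))]
                rfl
            show (Real.sqrt (p (eK ((asmEquiv _ (f', h)) (Sum.inr k₀)))) : ℂ) *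
                U (fun i => (asmEquiv _ (f', h)) (Sum.inl i))
                  (eK ((asmEquiv _ (f', h)) (Sum.inr k₀))) = _
            rw [hx, hfun]
          show ψ _ * star (ψ _) = _
          rw [e1 f, e1 g, halg _ (hp0 _)]
        calc (∑ h, vecState ψ (asmEquiv _ (f, h)) (asmEquiv _ (g, h)))
            = ∑ x : (∀ i : {j : Fin 3 // j ∉ ({k} : Finset (Fin 3))}, α i.1) × Fin (d k₀),
                (p (eK x.2) : ℂ) *
                (U (asmEquiv ({k} : Finset (Fin 3)) (Ef f, x.1)) (eK x.2) *
                 star (U (asmEquiv ({k} : Finset (Fin 3)) (Ef g, x.1)) (eK x.2))) := by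
              refine Fintype.sum_equiv Eh _ _ fun h => ?_
              rw [hterm h]
          _ = ∑ h' : (∀ i : {j : Fin 3 // j ∉ ({k} : Finset (Fin 3))}, α i.1),
                ∑ j : Fin (d k₀), (p (eK j) : ℂ) *
                (U (asmEquiv ({k} : Finset (Fin 3)) (Ef f, h')) (eK j) *
                 star (U (asmEquiv ({k} : Finset (Fin 3)) (Ef g, h')) (eK j))) := by
              rw [Fintype.sum_prod_type]
          _ = ∑ h', ρ (asmEquiv ({k} : Finset (Fin 3)) (Ef f, h'))
                (asmEquiv ({k} : Finset (Fin 3)) (Ef g, h')) := by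
              refine Finset.sum_congr rfl fun h' _ => ?_
              rw [hrho]
              exact Equiv.sum_comp eK (fun m => (p m : ℂ) *
                (U (asmEquiv ({k} : Finset (Fin 3)) (Ef f, h')) m *
                 star (U (asmEquiv ({k} : Finset (Fin 3)) (Ef g, h')) m)))
      exact matEntropy_congr Ef hEntry
  -- assemble
  rw [DeltaPart]
  refine le_trans (csInf_le ?_ ⟨d, ψ, hpur, rfl⟩) ?_
  · refine ⟨0, ?_⟩
    rintro x ⟨d', ψ', hpur', rfl⟩
    exact Finset.sum_nonneg fun k _ => matEntropy_reduce_vecState_nonneg _ _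
      (by rw [trace_vecState_of_purifies ψ' ρ hpur', hρ.2])
  · have hsum : ∑ k : Fin 3, matEntropy (reduce (partyFinset id k) (vecState ψ))
        = matEntropy (reduce ({k₀}ᶜ : Finset (Fin 3)) ρ)
          + ∑ k ∈ Finset.univ.erase k₀, matEntropy (reduce {k} ρ) := by
      rw [← Finset.add_sum_erase Finset.univ _ (Finset.mem_univ k₀)]
      congr 1
      · rw [hval k₀, if_pos rfl]
      · refine Finset.sum_congr rfl fun k hkmem => ?_
        rw [hval k, if_neg (Finset.ne_of_mem_erase hkmem)]
    rw [hsum, add_comm]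


/-- upper bound for the tripartite entanglement of purification:
`Δ_P(A:B:C) ≤ S_A + S_B + S_{AB}`, hence `Δ_P` is at most the minimum over the
three cyclic permutations.  Subsystems `A, B, C` are indexed by `0, 1, 2 : Fin 3`. -/
theorem DeltaP_tripartite_upper_bound {α : Fin 3 → Type}
    [∀ i, Fintype (α i)] [∀ i, DecidableEq (α i)]
    (ρ : Matrix (∀ i, α i) (∀ i, α i) ℂ) (hρ : IsDensityMatrix ρ) :
    DeltaPart id ρ ≤ matEntropy (reduce {0} ρ) + matEntropy (reduce {1} ρ)
        + matEntropy (reduce ({0, 1} : Finset (Fin 3)) ρ) ∧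
    DeltaPart id ρ ≤ min (matEntropy (reduce {0} ρ) + matEntropy (reduce {1} ρ)
          + matEntropy (reduce ({0, 1} : Finset (Fin 3)) ρ))
        (min (matEntropy (reduce {1} ρ) + matEntropy (reduce {2} ρ)
            + matEntropy (reduce ({1, 2} : Finset (Fin 3)) ρ))
          (matEntropy (reduce {2} ρ) + matEntropy (reduce {0} ρ)
            + matEntropy (reduce ({2, 0} : Finset (Fin 3)) ρ))) := by
  have h2' : DeltaPart id ρ ≤ matEntropy (reduce {0} ρ) + matEntropy (reduce {1} ρ)
      + matEntropy (reduce ({0, 1} : Finset (Fin 3)) ρ) := by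
    have h := key ρ hρ 2
    rw [show (Finset.univ.erase (2 : Fin 3)) = ({0, 1} : Finset (Fin 3)) from by decide,
      show (({2} : Finset (Fin 3))ᶜ) = ({0, 1} : Finset (Fin 3)) from by decide] at h
    rwa [Finset.sum_pair (show (0 : Fin 3) ≠ 1 from by decide)] at h
  have h0' : DeltaPart id ρ ≤ matEntropy (reduce {1} ρ) + matEntropy (reduce {2} ρ)
      + matEntropy (reduce ({1, 2} : Finset (Fin 3)) ρ) := by
    have h := key ρ hρ 0
    rw [show (Finset.univ.erase (0 : Fin 3)) = ({1, 2} : Finset (Fin 3)) from by decide,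
      show (({0} : Finset (Fin 3))ᶜ) = ({1, 2} : Finset (Fin 3)) from by decide] at h
    rwa [Finset.sum_pair (show (1 : Fin 3) ≠ 2 from by decide)] at h
  have h1' : DeltaPart id ρ ≤ matEntropy (reduce {2} ρ) + matEntropy (reduce {0} ρ)
      + matEntropy (reduce ({2, 0} : Finset (Fin 3)) ρ) := by
    have h := key ρ hρ 1
    rw [show (Finset.univ.erase (1 : Fin 3)) = ({2, 0} : Finset (Fin 3)) from by decide,
      show (({1} : Finset (Fin 3))ᶜ) = ({2, 0} : Finset (Fin 3)) from by decide] at h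
    rwa [Finset.sum_pair (show (2 : Fin 3) ≠ 0 from by decide)] at h
  exact ⟨h2', le_min h2' (le_min h0' h1')⟩
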